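/- arXiv:math/0203030 — 4 statements merged into one kernel-verified Lean document; each statement's English description precedes it below -/
import Mathlib

section
/- In the completion setup, the subgroup L̃ = {(t, φ(t)) : t ∈ L} is uniformly discrete in G × H: there exists an open neighbourhood N of (0,0) in G × H such that L̃ ∩ N = {(0,0)}; in particular L̃ is a discrete subgroup of G × H. -/
open scoped Pointwise

/-- A function `η : G → ℂ` on an additive abelian group is positive definite if all the
finite double sums `∑ i, ∑ j, c i * conj (c j) * η (x i - x j)` are nonnegative reals. -/
def IsPositiveDefiniteFn {G : Type*} [AddCommGroup G] (η : G → ℂ) : Prop :=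
  ∀ (N : ℕ) (x : Fin N → G) (c : Fin N → ℂ),
    ∃ r : ℝ, 0 ≤ r ∧ ∑ i, ∑ j, c i * (starRingEnd ℂ) (c j) * η (x i - x j) = (r : ℂ)

/-- The autocorrelation pseudometric `ρ(s,t) = |1 − η(s−t)/η(0)|^{1/2}`. -/
noncomputable def acRho {G : Type*} [AddCommGroup G] (η : G → ℂ) (s t : G) : ℝ :=
  Real.sqrt (‖1 - η (s - t) / η 0‖)

/-- The set of `ε`-almost periods `P_ε = {t : ρ(t,0) < ε}`. -/
noncomputable def almostPeriods {G : Type*} [AddCommGroup G] (η : G → ℂ) (ε : ℝ) : Set G :=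
  {t : G | acRho η t 0 < ε}

/-- A subset `P` of a topological abelian group is relatively dense if `P + K = G`
for some compact `K`. -/
def RelativelyDense {G : Type*} [AddCommGroup G] [TopologicalSpace G] (P : Set G) : Prop :=
  ∃ K : Set G, IsCompact K ∧ P + K = Set.univ

/-- In the completion setup, the diagonal embedding `L̃ = {(t, φ(t)) : t ∈ L}` of the group `L`
generated by the support of `η` is uniformly discrete in `G × H`, where `H` is the completion
of `L` in the autocorrelation pseudometric and `φ` the canonical map; in particular `L̃` is a
discrete subgroup of `G × H`. -/
theorem diagonal_embedding_uniformly_discrete {G : Type*} [AddCommGroup G] [TopologicalSpace G]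
    [IsTopologicalAddGroup G] [LocallyCompactSpace G] [T2Space G] [SigmaCompactSpace G]
    (η : G → ℂ) (hpd : IsPositiveDefiniteFn η) (hη0 : 0 < (η 0).re)
    (hclosed : IsClosed {z : G | η z ≠ 0}) (hdiscrete : DiscreteTopology {z : G | η z ≠ 0})
    (hdense : ∀ ε : ℝ, 0 < ε → RelativelyDense (almostPeriods η ε))
    [PseudoMetricSpace ↥(AddSubgroup.closure {z : G | η z ≠ 0})]
    (hdist : ∀ s t : ↥(AddSubgroup.closure {z : G | η z ≠ 0}),
      dist s t = acRho η (s : G) (t : G)) :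
    ∃ N : Set (G × UniformSpace.Completion ↥(AddSubgroup.closure {z : G | η z ≠ 0})),
      IsOpen N ∧
      ((0 : G), ((0 : ↥(AddSubgroup.closure {z : G | η z ≠ 0})) :
          UniformSpace.Completion ↥(AddSubgroup.closure {z : G | η z ≠ 0}))) ∈ N ∧
      {p : G × UniformSpace.Completion ↥(AddSubgroup.closure {z : G | η z ≠ 0}) |
          ∃ t : ↥(AddSubgroup.closure {z : G | η z ≠ 0}),
            p = ((t : G), (t : UniformSpace.Completion ↥(AddSubgroup.closure {z : G | η z ≠ 0})))}
        ∩ N =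
      {((0 : G), ((0 : ↥(AddSubgroup.closure {z : G | η z ≠ 0})) :
          UniformSpace.Completion ↥(AddSubgroup.closure {z : G | η z ≠ 0})))} := by
  classical
  have hη0' : η 0 ≠ 0 := by
    intro h; rw [h] at hη0; simp at hη0
  have h0Δ : (0 : G) ∈ {z : G | η z ≠ 0} := hη0'
  -- isolate 0 in the discrete set Δ
  have hopen : IsOpen {(⟨0, h0Δ⟩ : {z : G | η z ≠ 0})} := isOpen_discrete _
  obtain ⟨U, hU, hUeq⟩ := isOpen_induced_iff.mp hopen
  have hmemU : ∀ z : G, η z ≠ 0 → (z ∈ U ↔ z = 0) := by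
    intro z hz
    constructor
    · intro hzU
      have : (⟨z, hz⟩ : {z : G | η z ≠ 0}) ∈ Subtype.val ⁻¹' U := hzU
      rw [hUeq] at this
      exact congrArg Subtype.val this
    · rintro rfl
      have : (⟨0, h0Δ⟩ : {z : G | η z ≠ 0}) ∈ ({(⟨0, h0Δ⟩ : {z : G | η z ≠ 0})} :
        Set {z : G | η z ≠ 0}) := rfl
      rw [← hUeq] at this
      exact this
  refine ⟨U ×ˢ Metric.ball (((0 : ↥(AddSubgroup.closure {z : G | η z ≠ 0})) :
      UniformSpace.Completion ↥(AddSubgroup.closure {z : G | η z ≠ 0}))) 1,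
    hU.prod Metric.isOpen_ball, ⟨(hmemU 0 hη0').mpr rfl, by simp⟩, ?_⟩
  ext p
  constructor
  · rintro ⟨⟨t, rfl⟩, htU, htB⟩
    have hd : dist ((t : UniformSpace.Completion ↥(AddSubgroup.closure {z : G | η z ≠ 0})))
        (((0 : ↥(AddSubgroup.closure {z : G | η z ≠ 0})) :
          UniformSpace.Completion ↥(AddSubgroup.closure {z : G | η z ≠ 0})))
        = dist t (0 : ↥(AddSubgroup.closure {z : G | η z ≠ 0})) :=
      UniformSpace.Completion.dist_eq t 0
    have hlt : acRho η (t : G) (((0 : ↥(AddSubgroup.closure {z : G | η z ≠ 0})) : G)) < 1 := by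
      rw [← hdist t 0, ← hd]
      exact htB
    have hz : (((0 : ↥(AddSubgroup.closure {z : G | η z ≠ 0})) : G)) = (0 : G) := rfl
    rw [hz] at hlt
    have hηt : η (t : G) ≠ 0 := by
      intro h
      rw [acRho, sub_zero, h] at hlt
      simp at hlt
    have ht0 : (t : G) = 0 := (hmemU _ hηt).mp htU
    have : t = (0 : ↥(AddSubgroup.closure {z : G | η z ≠ 0})) := Subtype.ext ht0
    subst this
    rfl
  · rintro rfl
    exact ⟨⟨(0 : ↥(AddSubgroup.closure {z : G | η z ≠ 0})), rfl⟩, (hmemU 0 hη0').mpr rfl, by simp⟩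
end

section
/- In the completion setup, the subgroup L̃ = {(t, φ(t)) : t ∈ L} is relatively dense in G × H: there exists a compact set C ⊆ G × H such that L̃ + C = G × H. -/
open scoped Pointwise

theorem acRho_congr {G : Type*} [AddCommGroup G] (η : G → ℂ) {s t u v : G}
    (h : s - t = u - v) : acRho η s t = acRho η u v := by
  simp only [acRho, h]

theorem eta_ne_zero_of_acRho_lt_one {G : Type*} [AddCommGroup G] (η : G → ℂ) {z : G}
    (h : acRho η z 0 < 1) : η z ≠ 0 := by
  intro hz
  rw [acRho, sub_zero, hz, zero_div, sub_zero, norm_one, Real.sqrt_one] at h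
  exact lt_irrefl 1 h

theorem aux_main {G : Type*} [AddCommGroup G] [TopologicalSpace G]
    [IsTopologicalAddGroup G] [T2Space G]
    (η : G → ℂ)
    (hclosed : IsClosed {z : G | η z ≠ 0}) (hdiscrete : DiscreteTopology {z : G | η z ≠ 0})
    (hdense : ∀ ε : ℝ, 0 < ε → RelativelyDense (almostPeriods η ε))
    (L : AddSubgroup G) (hL : {z : G | η z ≠ 0} ⊆ (L : Set G))
    [PseudoMetricSpace ↥L]
    (hdist : ∀ s t : ↥L, dist s t = acRho η (s : G) (t : G)) :
    ∃ C : Set (G × UniformSpace.Completion ↥L),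
      IsCompact C ∧
      {p : G × UniformSpace.Completion ↥L |
          ∃ t : ↥L, p = ((t : G), (t : UniformSpace.Completion ↥L))} + C = Set.univ := by
  classical
  haveI hUAG : IsUniformAddGroup ↥L := by
    constructor
    rw [Metric.uniformContinuous_iff]
    intro ε hε
    refine ⟨ε / 2, by positivity, ?_⟩
    rintro ⟨a, b⟩ ⟨c, d⟩ hab
    rw [Prod.dist_eq, max_lt_iff] at hab
    have h1 : dist (a - b) (c - d) ≤ dist a c + dist b d := by
      calc dist (a - b) (c - d) ≤ dist (a - b) (c - b) + dist (c - b) (c - d) :=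
            dist_triangle _ _ _
        _ = dist a c + dist b d := by
            rw [hdist (a - b) (c - b), hdist (c - b) (c - d), hdist a c, dist_comm b d,
              hdist d b]
            congr 1
            · exact acRho_congr η (by push_cast; abel)
            · exact acRho_congr η (by push_cast; abel)
    calc dist (a - b) (c - d) ≤ dist a c + dist b d := h1
      _ < ε / 2 + ε / 2 := add_lt_add hab.1 hab.2
      _ = ε := by ring
  set H := UniformSpace.Completion ↥L with hH
  -- translation invariance of the completion distance
  have hinv : ∀ a b c : H, dist (a + c) (b + c) = dist a b := by
    intro a b c
    refine UniformSpace.Completion.induction_on₃ a b c ?_ ?_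
    · apply isClosed_eq
      · exact (continuous_fst.add (continuous_snd.comp continuous_snd)).dist
          ((continuous_fst.comp continuous_snd).add (continuous_snd.comp continuous_snd))
      · exact continuous_fst.dist (continuous_fst.comp continuous_snd)
    · intro x y z
      rw [← UniformSpace.Completion.coe_add, ← UniformSpace.Completion.coe_add,
        UniformSpace.Completion.dist_eq, UniformSpace.Completion.dist_eq, hdist, hdist]
      exact acRho_congr η (by push_cast; abel)
  have hsub0 : ∀ a b : H, dist (a - b) 0 = dist a b := by
    intro a b
    have h2 := hinv (a - b) 0 b
    rw [sub_add_cancel, zero_add] at h2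
    exact h2.symm
  -- the set S of 1/2-almost periods in L and its image closure B
  set S : Set ↥L := {u : ↥L | dist u 0 < 1/2} with hS
  set B : Set H := closure ((fun u : ↥L => (u : H)) '' S) with hB
  have hTBS : TotallyBounded S := by
    rw [Metric.totallyBounded_iff]
    intro ε hε
    set δ : ℝ := min ε 1 with hδdef
    have hδ0 : 0 < δ := lt_min hε one_pos
    have hδ1 : δ ≤ 1 := min_le_right _ _
    have hδε : δ ≤ ε := min_le_left _ _
    obtain ⟨K', hK'c, hK'⟩ := hdense (δ / 2) (by positivity)
    have hF : ({z : G | η z ≠ 0} ∩ K').Finite :=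
      (hK'c.inter_left hclosed).finite
        (isDiscrete_iff_discreteTopology.mpr (DiscreteTopology.of_subset hdiscrete Set.inter_subset_left))
    refine ⟨(fun x : ↥L => (x : G)) ⁻¹' ({z : G | η z ≠ 0} ∩ K'),
      hF.preimage Subtype.val_injective.injOn, ?_⟩
    intro u hu
    have hmem : (u : G) ∈ almostPeriods η (δ / 2) + K' := hK' ▸ Set.mem_univ _
    obtain ⟨p, hp, k, hk, hpk⟩ := Set.mem_add.1 hmem
    have hp' : acRho η p 0 < δ / 2 := hp
    have hpΔ : η p ≠ 0 := eta_ne_zero_of_acRho_lt_one η (by linarith)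
    set pL : ↥L := ⟨p, hL hpΔ⟩ with hpL
    set kL : ↥L := u - pL with hkL
    have hkLcoe : (kL : G) = k := by
      push_cast [hkL, hpL]
      rw [← hpk]; abel
    have hdistpL : dist pL (0 : ↥L) < δ / 2 := by
      rw [hdist]
      have : acRho η (pL : G) ((0 : ↥L) : G) = acRho η p 0 := by
        exact acRho_congr η (by push_cast [hpL]; ring)
      rw [this]; exact hp'
    have hukd : dist u kL < ε := by
      rw [hdist]
      have : acRho η (u : G) (kL : G) = acRho η p 0 := by
        refine acRho_congr η ?_
        rw [hkLcoe]
        rw [← hpk]; abel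
      rw [this]
      linarith
    have hkΔ : η (kL : G) ≠ 0 := by
      refine eta_ne_zero_of_acRho_lt_one η ?_
      have e1 : acRho η (kL : G) 0 = acRho η (u : G) (pL : G) := by
        refine acRho_congr η ?_
        push_cast [hkL]
        abel
      have e2 : acRho η (u : G) (pL : G) = dist u pL := (hdist u pL).symm
      have e3 : dist u pL ≤ dist u 0 + dist pL 0 := by
        calc dist u pL ≤ dist u 0 + dist 0 pL := dist_triangle _ _ _
          _ = dist u 0 + dist pL 0 := by rw [dist_comm (0 : ↥L) pL]
      have hu' : dist u (0 : ↥L) < 1/2 := hu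
      rw [e1, e2]
      linarith
    have hkK : (kL : G) ∈ K' := by rw [hkLcoe]; exact hk
    exact Set.mem_biUnion (Set.mem_preimage.2 ⟨hkΔ, hkK⟩) (Metric.mem_ball.2 hukd)
  have hBc : IsCompact B :=
    TotallyBounded.isCompact_of_isClosed
      ((hTBS.image (UniformSpace.Completion.uniformContinuous_coe ↥L)).closure)
      isClosed_closure
  -- every point of H at distance < 1/2 from 0 lies in B
  have hball : ∀ x : H, dist x 0 < 1/2 → x ∈ B := by
    intro x hx
    rw [hB, Metric.mem_closure_iff]
    intro ε hε
    have hpos : (0 : ℝ) < min ε (1/2 - dist x 0) := lt_min hε (by linarith)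
    obtain ⟨u, hu⟩ :=
      (UniformSpace.Completion.denseRange_coe (α := ↥L)).exists_dist_lt x hpos
    have hu1 : dist x ((u : H)) < ε := lt_of_lt_of_le hu (min_le_left _ _)
    have hu2 : dist x ((u : H)) < 1/2 - dist x 0 := lt_of_lt_of_le hu (min_le_right _ _)
    have huS : u ∈ S := by
      have h3 : dist ((u : H)) (0 : H) < 1/2 := by
        calc dist ((u : H)) (0 : H) ≤ dist ((u : H)) x + dist x 0 := dist_triangle _ _ _
          _ = dist x ((u : H)) + dist x 0 := by rw [dist_comm]
          _ < (1/2 - dist x 0) + dist x 0 := by linarith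
          _ = 1/2 := by ring
      rw [show (0 : H) = ((0 : ↥L) : H) from (UniformSpace.Completion.coe_zero (α := ↥L)).symm,
        UniformSpace.Completion.dist_eq] at h3
      exact h3
    exact ⟨(u : H), ⟨u, huS, rfl⟩, hu1⟩
  -- assemble
  obtain ⟨K, hKc, hKP⟩ := hdense (1/4) (by norm_num)
  refine ⟨K ×ˢ B, hKc.prod hBc, ?_⟩
  rw [Set.eq_univ_iff_forall]
  rintro ⟨g, h⟩
  obtain ⟨s, hs⟩ :=
    (UniformSpace.Completion.denseRange_coe (α := ↥L)).exists_dist_lt h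
      (by norm_num : (0:ℝ) < 1/4)
  have hmem : g - (s : G) ∈ almostPeriods η (1/4) + K := hKP ▸ Set.mem_univ _
  obtain ⟨p, hp, k, hk, hpk⟩ := Set.mem_add.1 hmem
  have hp' : acRho η p 0 < 1/4 := hp
  have hpΔ : η p ≠ 0 := eta_ne_zero_of_acRho_lt_one η (by linarith)
  set pL : ↥L := ⟨p, hL hpΔ⟩ with hpLdef
  set t : ↥L := s + pL with htdef
  have htH : ((t : ↥L) : H) = ((s : ↥L) : H) + ((pL : ↥L) : H) :=
    UniformSpace.Completion.coe_add s pL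
  have hBmem : h - ((t : ↥L) : H) ∈ B := by
    apply hball
    rw [hsub0]
    have hst : dist ((s : ↥L) : H) ((t : ↥L) : H) < 1/4 := by
      rw [UniformSpace.Completion.dist_eq, dist_comm, hdist]
      have : acRho η ((t : ↥L) : G) ((s : ↥L) : G) = acRho η p 0 := by
        refine acRho_congr η ?_
        push_cast [htdef, hpLdef]
        abel
      rw [this]; exact hp'
    calc dist h ((t : ↥L) : H) ≤ dist h ((s : ↥L) : H) + dist ((s : ↥L) : H) ((t : ↥L) : H) :=
          dist_triangle _ _ _
      _ < 1/4 + 1/4 := add_lt_add hs hst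
      _ = 1/2 := by ring
  refine Set.mem_add.2 ⟨((t : G), ((t : ↥L) : H)), ⟨t, rfl⟩,
    (k, h - ((t : ↥L) : H)), ⟨hk, hBmem⟩, ?_⟩
  have hG : (t : G) + k = g := by
    push_cast [htdef, hpLdef]
    rw [add_assoc, hpk]
    abel
  have hH2 : ((t : ↥L) : H) + (h - ((t : ↥L) : H)) = h := by abel
  rw [Prod.mk_add_mk, hG, hH2]

/-- In the completion setup, the diagonal embedding `L̃ = {(t, φ(t)) : t ∈ L}` is relatively
dense in `G × H`: there is a compact `C` with `L̃ + C = G × H`. -/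
theorem diagonal_embedding_relatively_dense {G : Type*} [AddCommGroup G] [TopologicalSpace G]
    [IsTopologicalAddGroup G] [LocallyCompactSpace G] [T2Space G] [SigmaCompactSpace G]
    (η : G → ℂ) (hpd : IsPositiveDefiniteFn η) (hη0 : 0 < (η 0).re)
    (hclosed : IsClosed {z : G | η z ≠ 0}) (hdiscrete : DiscreteTopology {z : G | η z ≠ 0})
    (hdense : ∀ ε : ℝ, 0 < ε → RelativelyDense (almostPeriods η ε))
    [PseudoMetricSpace ↥(AddSubgroup.closure {z : G | η z ≠ 0})]
    (hdist : ∀ s t : ↥(AddSubgroup.closure {z : G | η z ≠ 0}),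
      dist s t = acRho η (s : G) (t : G)) :
    ∃ C : Set (G × UniformSpace.Completion ↥(AddSubgroup.closure {z : G | η z ≠ 0})),
      IsCompact C ∧
      {p : G × UniformSpace.Completion ↥(AddSubgroup.closure {z : G | η z ≠ 0}) |
          ∃ t : ↥(AddSubgroup.closure {z : G | η z ≠ 0}),
            p = ((t : G), (t : UniformSpace.Completion ↥(AddSubgroup.closure {z : G | η z ≠ 0})))}
        + C = Set.univ :=
  aux_main η hclosed hdiscrete hdense _ AddSubgroup.subset_closure hdist
end

section
/- In the completion setup, the quotient topological group 𝕋 := (G × H) / L̃ (the quotient of G × H by the subgroup L̃ = {(t, φ(t)) : t ∈ L}, with the quotient topology) is compact. -/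
open scoped Pointwise

/-- Generic version: if `f : G → ℝ` plays the role of `t ↦ ρ(t,0)` for a subgroup `L ⊇ Δ`,
with `Δ` closed discrete, `f`-balls relatively dense, and `dist s t = f (s - t)` on `L`,
then `(G × Completion L) ⧸ L̃` is compact. -/
theorem aux_quotient_compact {G : Type*} [AddCommGroup G] [TopologicalSpace G]
    [IsTopologicalAddGroup G]
    (Δ : Set G) (L : AddSubgroup G) [PseudoMetricSpace ↥L] [IsUniformAddGroup ↥L]
    (f : G → ℝ)
    (hf1 : ∀ t : G, f t < 1 → t ∈ Δ)
    (hΔL : Δ ⊆ (L : Set G))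
    (hclosed : IsClosed Δ) (hdiscrete : DiscreteTopology Δ)
    (hdist : ∀ s t : ↥L, dist s t = f ((s : G) - (t : G)))
    (hcov : ∀ ε : ℝ, 0 < ε → ∃ K : Set G, IsCompact K ∧
      ∀ g : G, ∃ p k : G, f p < ε ∧ k ∈ K ∧ g = p + k) :
    CompactSpace
      ((G × UniformSpace.Completion ↥L) ⧸
        (L.subtype.prod UniformSpace.Completion.toCompl).range) := by
  classical
  -- the ball of radius 3/5 in L is totally bounded
  have hTB : TotallyBounded {l : ↥L | dist l 0 ≤ 3/5} := by
    rw [Metric.totallyBounded_iff]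
    intro δ hδ
    set δ' : ℝ := min δ (1/2) / 2 with hδ'def
    have hmin : 0 < min δ (1/2) := lt_min hδ (by norm_num)
    have hδ'pos : 0 < δ' := by positivity
    have hδ'lt : δ' < δ := by
      have h1 : min δ (1/2) ≤ δ := min_le_left _ _
      have h2 : min δ (1/2) / 2 < min δ (1/2) := by linarith
      linarith
    have hδ'le : δ' ≤ 1/4 := by
      have : min δ (1/2) ≤ 1/2 := min_le_right _ _
      rw [hδ'def]; linarith
    obtain ⟨K₁, hK₁c, hK₁⟩ := hcov δ' hδ'pos
    have hFfin : (Δ ∩ K₁).Finite := by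
      have hcpt : IsCompact (Δ ∩ K₁) := hK₁c.inter_left hclosed
      have hdt : DiscreteTopology ↥(Δ ∩ K₁) :=
        DiscreteTopology.of_subset hdiscrete Set.inter_subset_left
      exact hcpt.finite (isDiscrete_iff_discreteTopology.mpr hdt)
    refine ⟨((↑) : ↥L → G) ⁻¹' (Δ ∩ K₁), hFfin.preimage Subtype.coe_injective.injOn, ?_⟩
    intro l hl
    obtain ⟨p, k, hp, hk, hg⟩ := hK₁ (l : G)
    have hpΔ : p ∈ Δ := hf1 p (lt_of_lt_of_le hp (by linarith))
    have hpL : p ∈ L := hΔL hpΔ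
    have hkL : k ∈ L := by
      have hke : k = (l : G) - p := by rw [hg]; abel
      rw [hke]
      exact sub_mem l.2 hpL
    have hdlk : dist l (⟨k, hkL⟩ : ↥L) < δ' := by
      rw [hdist]
      have hlk : (l : G) - k = p := by rw [hg]; abel
      simpa [hlk] using hp
    have hk0 : dist (⟨k, hkL⟩ : ↥L) (0 : ↥L) < 1 := by
      have h1 : dist (⟨k, hkL⟩ : ↥L) (0 : ↥L) ≤ dist (⟨k, hkL⟩ : ↥L) l + dist l 0 :=
        dist_triangle _ _ _
      have h2 : dist (⟨k, hkL⟩ : ↥L) l < δ' := by rw [dist_comm]; exact hdlk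
      have h3 : dist l (0 : ↥L) ≤ 3/5 := hl
      linarith
    have hkΔ : k ∈ Δ := by
      apply hf1 k
      rw [hdist] at hk0
      simpa using hk0
    refine Set.mem_iUnion₂.2 ⟨⟨k, hkL⟩, ?_, ?_⟩
    · exact Set.mem_preimage.2 ⟨hkΔ, hk⟩
    · exact Metric.mem_ball.2 (hdlk.trans hδ'lt)
  -- the compact set C in the completion H
  have hcoeD : DenseRange ((↑) : ↥L → UniformSpace.Completion ↥L) :=
    UniformSpace.Completion.denseRange_coe
  set S : Set ↥L := {l : ↥L | dist l 0 ≤ 3/5} with hSdef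
  set C : Set (UniformSpace.Completion ↥L) :=
    closure (((↑) : ↥L → UniformSpace.Completion ↥L) '' S) with hCdef
  have hCc : IsCompact C := by
    apply TotallyBounded.isCompact_of_isClosed _ isClosed_closure
    exact (hTB.image (UniformSpace.Completion.uniformContinuous_coe ↥L)).closure
  have hCball : ∀ x : UniformSpace.Completion ↥L, dist x 0 ≤ 1/2 → x ∈ C := by
    intro x hx
    rw [hCdef]
    rw [Metric.mem_closure_iff]
    intro ε hε
    obtain ⟨l, hlx⟩ := Metric.denseRange_iff.1 hcoeD x (min ε (1/10))
      (lt_min hε (by norm_num))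
    refine ⟨(l : UniformSpace.Completion ↥L), ⟨l, ?_, rfl⟩, hlx.trans_le (min_le_left _ _)⟩
    have h0 : ((0 : ↥L) : UniformSpace.Completion ↥L) = 0 :=
      UniformSpace.Completion.coe_zero
    have h1 : dist l (0 : ↥L) = dist (l : UniformSpace.Completion ↥L) (0 : _) := by
      rw [← h0, UniformSpace.Completion.dist_eq]
    have h2 : dist (l : UniformSpace.Completion ↥L) 0 ≤
        dist (l : UniformSpace.Completion ↥L) x + dist x 0 := dist_triangle _ _ _
    have h3 : dist (l : UniformSpace.Completion ↥L) x < 1/10 := by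
      rw [dist_comm]; exact hlx.trans_le (min_le_right _ _)
    show dist l (0 : ↥L) ≤ 3/5
    rw [h1]
    linarith
  -- translation invariance of the metric on the completion
  have hHinv : ∀ a b : UniformSpace.Completion ↥L, dist (a - b) 0 = dist a b := by
    intro a b
    refine UniformSpace.Completion.induction_on₂ a b ?_ ?_
    · apply isClosed_eq
      · exact (continuous_fst.sub continuous_snd).dist continuous_const
      · exact continuous_fst.dist continuous_snd
    · intro a b
      rw [← UniformSpace.Completion.coe_sub, ← UniformSpace.Completion.coe_zero,
        UniformSpace.Completion.dist_eq, UniformSpace.Completion.dist_eq, hdist, hdist]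
      push_cast
      simp
  -- main covering argument
  obtain ⟨K₀, hK₀c, hK₀⟩ := hcov (1/8) (by norm_num)
  have hsurj : ∀ q : (G × UniformSpace.Completion ↥L) ⧸
      (L.subtype.prod UniformSpace.Completion.toCompl).range,
      ∃ x ∈ K₀ ×ˢ C, QuotientAddGroup.mk x = q := by
    intro q
    obtain ⟨⟨g, h⟩, rfl⟩ := QuotientAddGroup.mk_surjective q
    obtain ⟨l₀, hl₀⟩ := Metric.denseRange_iff.1 hcoeD h (1/8) (by norm_num)
    obtain ⟨p, k, hp, hk, hg⟩ := hK₀ (g - (l₀ : G))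
    have hpΔ : p ∈ Δ := hf1 p (lt_of_lt_of_le hp (by norm_num))
    have hpL : p ∈ L := hΔL hpΔ
    set t : ↥L := l₀ + ⟨p, hpL⟩ with htdef
    have hg' : g = p + k + (l₀ : G) := by
      have : g - (l₀ : G) + (l₀ : G) = p + k + (l₀ : G) := by rw [hg]
      simpa [sub_add_cancel] using this
    have hdist_lt : dist h ((t : ↥L) : UniformSpace.Completion ↥L) < 1/4 := by
      have h1 : dist h ((t : ↥L) : UniformSpace.Completion ↥L) ≤
          dist h ((l₀ : ↥L) : UniformSpace.Completion ↥L) +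
          dist ((l₀ : ↥L) : UniformSpace.Completion ↥L)
            ((t : ↥L) : UniformSpace.Completion ↥L) := dist_triangle _ _ _
      have h2 : dist ((l₀ : ↥L) : UniformSpace.Completion ↥L)
          ((t : ↥L) : UniformSpace.Completion ↥L) = dist t l₀ := by
        rw [UniformSpace.Completion.dist_eq, dist_comm]
      have h3 : dist t l₀ < 1/8 := by
        rw [hdist]
        have : ((t : ↥L) : G) - (l₀ : G) = p := by
          rw [htdef]; push_cast; abel
        rw [this]
        exact hp
      linarith
    refine ⟨(k, h - ((t : ↥L) : UniformSpace.Completion ↥L)), ⟨hk, ?_⟩, ?_⟩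
    · apply hCball
      rw [hHinv]
      exact hdist_lt.le.trans (by norm_num)
    · rw [QuotientAddGroup.eq]
      refine ⟨t, ?_⟩
      have hrhs : -((k : G), h - ((t : ↥L) : UniformSpace.Completion ↥L)) + (g, h) =
          (-k + g, -(h - ((t : ↥L) : UniformSpace.Completion ↥L)) + h) := rfl
      rw [hrhs]
      have h1 : ((t : ↥L) : G) = -k + g := by
        rw [htdef, hg']; push_cast; abel
      have h2 : ((t : ↥L) : UniformSpace.Completion ↥L) =
          -(h - ((t : ↥L) : UniformSpace.Completion ↥L)) + h := by abel
      calc (L.subtype.prod UniformSpace.Completion.toCompl) t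
          = (((t : ↥L) : G), ((t : ↥L) : UniformSpace.Completion ↥L)) := rfl
        _ = (-k + g, -(h - ((t : ↥L) : UniformSpace.Completion ↥L)) + h) := by
            rw [h1, ← h2]
  -- conclude compactness
  refine ⟨?_⟩
  have himg : QuotientAddGroup.mk '' (K₀ ×ˢ C) = (Set.univ :
      Set ((G × UniformSpace.Completion ↥L) ⧸
        (L.subtype.prod UniformSpace.Completion.toCompl).range)) := by
    apply Set.eq_univ_of_forall
    intro q
    obtain ⟨x, hx, hxq⟩ := hsurj q
    exact ⟨x, hx, hxq⟩
  rw [← himg]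
  exact (hK₀c.prod hCc).image QuotientAddGroup.continuous_mk

/-- In the completion setup, the quotient `𝕋 = (G × H)/L̃` of `G × H` by the diagonal
embedding `L̃ = {(t, φ(t)) : t ∈ L}` is a compact group. -/
theorem quotient_by_diagonal_embedding_compact {G : Type*} [AddCommGroup G] [TopologicalSpace G]
    [IsTopologicalAddGroup G] [LocallyCompactSpace G] [T2Space G] [SigmaCompactSpace G]
    (η : G → ℂ) (hpd : IsPositiveDefiniteFn η) (hη0 : 0 < (η 0).re)
    (hclosed : IsClosed {z : G | η z ≠ 0}) (hdiscrete : DiscreteTopology {z : G | η z ≠ 0})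
    (hdense : ∀ ε : ℝ, 0 < ε → RelativelyDense (almostPeriods η ε))
    [PseudoMetricSpace ↥(AddSubgroup.closure {z : G | η z ≠ 0})]
    [IsUniformAddGroup ↥(AddSubgroup.closure {z : G | η z ≠ 0})]
    (hdist : ∀ s t : ↥(AddSubgroup.closure {z : G | η z ≠ 0}),
      dist s t = acRho η (s : G) (t : G)) :
    CompactSpace
      ((G × UniformSpace.Completion ↥(AddSubgroup.closure {z : G | η z ≠ 0})) ⧸
        ((AddSubgroup.closure {z : G | η z ≠ 0}).subtype.prod
          UniformSpace.Completion.toCompl).range) := by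
  apply aux_quotient_compact {z : G | η z ≠ 0} (AddSubgroup.closure {z : G | η z ≠ 0})
      (fun t => acRho η t 0)
  · -- hf1
    intro t ht
    by_contra hmem
    have hz : η t = 0 := not_not.1 hmem
    rw [acRho, sub_zero, hz, zero_div, sub_zero, norm_one, Real.sqrt_one] at ht
    exact lt_irrefl 1 ht
  · exact AddSubgroup.subset_closure
  · exact hclosed
  · exact hdiscrete
  · -- hdist
    intro s t
    rw [hdist]
    simp [acRho, sub_zero]
  · -- hcov
    intro ε hε
    obtain ⟨K, hKc, hKeq⟩ := hdense ε hε
    refine ⟨K, hKc, fun g => ?_⟩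
    have hg : g ∈ almostPeriods η ε + K := by rw [hKeq]; exact Set.mem_univ g
    obtain ⟨p, hp, k, hk, hpk⟩ := Set.mem_add.1 hg
    exact ⟨p, k, hp, hk, hpk.symm⟩
end

section
/- Let G be a locally compact Hausdorff abelian topological group, K a compact neighbourhood of 0 in G, and η : G → ℂ positive definite with η(0) > 0 such that Δ := {z ∈ G : η(z) ≠ 0} is uniformly discrete in G. For t ∈ G define N(t) := sup_{x ∈ G} ∑_{z ∈ (Δ ∪ (t + Δ)) ∩ (x + K)} |η(z − t) − η(z)| (each sum is over a finite set of uniformly bounded cardinality, so N(t) is a finite real number; N(t) is the K-norm of δ_t * γ − γ for the autocorrelation measure γ = ∑_{z∈Δ} η(z) δ_z). Then the following are equivalent: (i) for every ε > 0 the set {t ∈ G : N(t) < ε} is relatively dense in G (norm almost periodicity of γ); (ii) for every ε > 0 the set P_ε = {t ∈ G : |1 − η(t)/η(0)|^{1/2} < ε} is relatively dense in G. -/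
open scoped Pointwise

/-- A subset `P` of a topological abelian group is uniformly discrete if there is an open
neighbourhood `V` of `0` such that `(t + V) ∩ P = {t}` for every `t ∈ P`. -/
def UniformlyDiscrete {G : Type*} [AddCommGroup G] [TopologicalSpace G] (P : Set G) : Prop :=
  ∃ V : Set G, IsOpen V ∧ (0 : G) ∈ V ∧ ∀ t ∈ P, ({t} + V) ∩ P = {t}


section PDAux
variable {G : Type*} [AddCommGroup G] {η : G → ℂ}

lemma pd_real (hpd : IsPositiveDefiniteFn η) : η 0 = ((η 0).re : ℂ) ∧ 0 ≤ (η 0).re := by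
  obtain ⟨r, hr, he⟩ := hpd 1 ![0] ![1]
  simp [Fin.sum_univ_one] at he
  rw [he]; simp [hr]

lemma pd_herm (hpd : IsPositiveDefiniteFn η) (z : G) :
    η (-z) = (starRingEnd ℂ) (η z) := by
  obtain ⟨h0, _⟩ := pd_real hpd
  obtain ⟨r1, _, he1⟩ := hpd 2 ![0, z] ![1, 1]
  obtain ⟨r2, _, he2⟩ := hpd 2 ![0, z] ![1, Complex.I]
  simp [Fin.sum_univ_two, sub_eq_zero] at he1 he2
  rw [h0] at he1 he2
  have h1 := congrArg Complex.im he1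
  have h2 := congrArg Complex.im he2
  have h3 := congrArg Complex.re he2
  simp [Complex.ext_iff]
  constructor <;> [skip; skip] <;> simp at h1 h2 h3 <;> linarith



lemma pd_abs_le (hpd : IsPositiveDefiniteFn η) (z : G) :
    ‖η z‖ ≤ (η 0).re := by
  obtain ⟨h0, h0pos⟩ := pd_real hpd
  rcases eq_or_ne (η z) 0 with hz | hz
  · simp [hz, h0pos]
  · set a : ℝ := ‖η z‖ with ha
    have hapos : 0 < a := by simpa [ha] using hz
    obtain ⟨r, hr, he⟩ := hpd 2 ![0, z] ![(a : ℂ), -((starRingEnd ℂ) (η z))]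
    simp [Fin.sum_univ_two] at he
    rw [h0, pd_herm hpd z] at he
    have hA : (starRingEnd ℂ) (η z) * η z = (a:ℂ) * (a:ℂ) := by
      rw [mul_comm, Complex.mul_conj, Complex.normSq_eq_norm_sq]
      push_cast
      ring
    have e : ((a*a*(η 0).re - 2*a*(a*a) + a*a*(η 0).re : ℝ) : ℂ) = r := by
      rw [← he]; push_cast
      linear_combination (2*(a:ℂ) - ((η 0).re : ℂ)) * hA
    rw [Complex.ofReal_inj] at e
    nlinarith [hr, mul_pos hapos hapos]

lemma pd_diff (hpd : IsPositiveDefiniteFn η) (hη0 : 0 < (η 0).re) (s t : G) :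
    (‖η s - η t‖)^2 ≤ 2*(η 0).re*((η 0).re - (η (s-t)).re) := by
  obtain ⟨h0, h0pos⟩ := pd_real hpd
  set φ0 := (η 0).re
  have hure : (η (s-t)).re ≤ φ0 := le_trans (Complex.re_le_norm _) (pd_abs_le hpd _)
  rcases eq_or_ne (η s - η t) 0 with hd | hd
  · rw [hd]
    simp only [map_zero, norm_zero, ne_eq, OfNat.ofNat_ne_zero, not_false_eq_true, zero_pow]
    nlinarith [mul_nonneg h0pos (sub_nonneg.2 hure)]
  · set A : ℝ := ‖η s - η t‖ ^ 2 with hAdef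
    have hApos : 0 < A := pow_pos (norm_pos_iff.mpr hd) 2
    obtain ⟨r, hr, he⟩ := hpd 3 ![0, s, t]
      ![(A : ℂ), -((φ0:ℂ) * (starRingEnd ℂ) (η s - η t)), (φ0:ℂ) * (starRingEnd ℂ) (η s - η t)]
    simp [Fin.sum_univ_three] at he
    rw [h0, pd_herm hpd s, pd_herm hpd t, show t - s = -(s-t) by abel, pd_herm hpd (s-t)] at he
    have hA : ((starRingEnd ℂ) (η s) - (starRingEnd ℂ) (η t)) * (η s - η t) = ((A:ℝ) : ℂ) := by
      rw [show (starRingEnd ℂ) (η s) - (starRingEnd ℂ) (η t) = (starRingEnd ℂ) (η s - η t) by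
        rw [map_sub], mul_comm, Complex.mul_conj, Complex.normSq_eq_norm_sq]
    have hu : η (s-t) + (starRingEnd ℂ) (η (s-t)) = 2*(((η (s-t)).re : ℝ) : ℂ) := by
      rw [Complex.add_conj]; push_cast; ring
    have e : ((A^2*φ0 + 2*A*φ0^3 - 2*A^2*φ0 - 2*A*φ0^2*(η (s-t)).re : ℝ) : ℂ) = r := by
      rw [← he]; push_cast
      linear_combination (2*(A:ℂ)*(φ0:ℂ) + (φ0:ℂ)^2*(η (s-t) + (starRingEnd ℂ) (η (s-t))) - 2*(φ0:ℂ)^3) * hA + ((φ0:ℂ)^2 * (A:ℂ)) * hu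
    rw [Complex.ofReal_inj] at e
    nlinarith [hr, hApos, hη0, mul_pos hApos hη0]

end PDAux

lemma ud_inter_card {G : Type*} [AddCommGroup G] [TopologicalSpace G] [IsTopologicalAddGroup G]
    {Δ : Set G} (hud : UniformlyDiscrete Δ) {K : Set G} (hK : IsCompact K) :
    ∃ n : ℕ, ∀ x : G, (Δ ∩ ({x} + K)).Finite ∧ (Δ ∩ ({x} + K)).ncard ≤ n := by
  classical
  obtain ⟨V, hVopen, hV0, hsep⟩ := hud
  obtain ⟨W, hWopen, hW0, hWadd⟩ := exists_open_nhds_zero_half (hVopen.mem_nhds hV0)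
  set W' : Set G := W ∩ (-W) with hW'def
  have hW'open : IsOpen W' := hWopen.inter hWopen.neg
  have hW'0 : (0:G) ∈ W' := ⟨hW0, by simpa using hW0⟩
  -- any translate of W' contains at most one point of Δ
  have hsingle : ∀ c : G, ∀ p ∈ Δ ∩ ({c} + W'), ∀ q ∈ Δ ∩ ({c} + W'), p = q := by
    rintro c p ⟨hpΔ, hpW⟩ q ⟨hqΔ, hqW⟩
    rw [Set.singleton_add] at hpW hqW
    obtain ⟨w1, hw1, rfl⟩ := hpW
    obtain ⟨w2, hw2, rfl⟩ := hqW
    have hv : w2 - w1 ∈ V := by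
      have := hWadd w2 hw2.1 (-w1) (by simpa using hw1.2)
      simpa [sub_eq_add_neg] using this
    have hmem : c + w2 ∈ ({c + w1} + V) ∩ Δ := by
      refine ⟨?_, hqΔ⟩
      rw [Set.singleton_add]
      exact ⟨w2 - w1, hv, by abel⟩
    have := hsep (c + w1) hpΔ
    rw [this] at hmem
    exact (hmem.symm : _)
  -- cover K by finitely many translates of W'
  obtain ⟨tset, -, hcover⟩ := hK.elim_nhds_subcover (fun k => {k} + W')
    (fun k _ => hW'open.add_left.mem_nhds (by
      refine ⟨k, Set.mem_singleton k, 0, hW'0, by simp⟩))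
  refine ⟨tset.card, fun x => ?_⟩
  have hsub : Δ ∩ ({x} + K) ⊆ ⋃ k ∈ tset, (Δ ∩ ({x + k} + W')) := by
    rintro p ⟨hpΔ, hpK⟩
    rw [Set.singleton_add] at hpK
    obtain ⟨c, hc, rfl⟩ := hpK
    obtain ⟨k, hk, hck⟩ := Set.mem_iUnion₂.mp (hcover hc)
    rw [Set.singleton_add] at hck
    obtain ⟨w, hw, rfl⟩ := hck
    refine Set.mem_iUnion₂.mpr ⟨k, hk, hpΔ, ?_⟩
    rw [Set.singleton_add]
    exact ⟨w, hw, by abel⟩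
  have hfin : (Δ ∩ ({x} + K)).Finite := by
    refine Set.Finite.subset (Set.Finite.biUnion tset.finite_toSet
      (fun k _ => Set.Subsingleton.finite (fun p hp q hq => hsingle (x+k) p hp q hq))) hsub
  refine ⟨hfin, ?_⟩
  -- injection into the finite cover index set
  have hex : ∀ p ∈ Δ ∩ ({x} + K), ∃ k, k ∈ tset ∧ p ∈ Δ ∩ ({x + k} + W') := by
    intro p hp
    obtain ⟨k, hk, hpk⟩ := Set.mem_iUnion₂.mp (hsub hp)
    exact ⟨k, hk, hpk⟩
  set f : G → G := fun p => if h : ∃ k, k ∈ tset ∧ p ∈ Δ ∩ ({x + k} + W') then h.choose else 0 with hf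
  have hmaps : ∀ p ∈ Δ ∩ ({x} + K), f p ∈ (tset : Set G) := by
    intro p hp
    have h := hex p hp
    simp only [hf, dif_pos h]
    exact h.choose_spec.1
  have hinj : Set.InjOn f (Δ ∩ ({x} + K)) := by
    intro p hp q hq hfpq
    have h1 := hex p hp
    have h2 := hex q hq
    have e1 : f p = h1.choose := by simp only [hf, dif_pos h1]
    have e2 : f q = h2.choose := by simp only [hf, dif_pos h2]
    have hp' := h1.choose_spec.2
    have hq' := h2.choose_spec.2
    rw [e1, e2] at hfpq
    rw [hfpq] at hp'
    exact hsingle _ p hp' q hq'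
  calc (Δ ∩ ({x} + K)).ncard ≤ (tset : Set G).ncard :=
        Set.ncard_le_ncard_of_injOn f hmaps hinj (tset.finite_toSet)
    _ = tset.card := Set.ncard_coe_finset _


lemma singleton_add_inter' {G : Type*} [AddCommGroup G] (t : G) (A B : Set G) :
    {t} + (A ∩ B) = ({t} + A) ∩ ({t} + B) := by
  simp only [Set.singleton_add]
  exact Set.image_inter (add_right_injective t)

lemma RelativelyDense.mono' {G : Type*} [AddCommGroup G] [TopologicalSpace G]
    {P Q : Set G} (h : P ⊆ Q) : RelativelyDense P → RelativelyDense Q := by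
  rintro ⟨C, hC, hPC⟩
  exact ⟨C, hC, Set.eq_univ_of_univ_subset (hPC ▸ Set.add_subset_add_right h)⟩

/-- The `K`-norm `‖δ_t * γ − γ‖_K` of the difference between the autocorrelation
`γ = ∑_{z ∈ Δ} η(z) δ_z` and its translate by `t`:
`N(t) = sup_x ∑_{z ∈ (Δ ∪ (t+Δ)) ∩ (x+K)} |η(z−t) − η(z)|`. -/
noncomputable def autocorrKNorm {G : Type*} [AddCommGroup G] [TopologicalSpace G]
    (η : G → ℂ) (K : Set G) (t : G) : ℝ :=
  ⨆ x : G, ∑' z : ↥(({z : G | η z ≠ 0} ∪ ({t} + {z : G | η z ≠ 0})) ∩ ({x} + K)),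
    ‖η ((z : G) - t) - η (z : G)‖

/-- For a positive definite `η` with `η(0) > 0` and uniformly discrete support, the
autocorrelation `γ = ∑_{z ∈ Δ} η(z) δ_z` is norm almost periodic if and only if all the sets
`P_ε` of `ε`-almost periods are relatively dense. -/
theorem norm_almost_periodic_iff_almostPeriods_relativelyDense {G : Type*} [AddCommGroup G]
    [TopologicalSpace G] [IsTopologicalAddGroup G] [LocallyCompactSpace G] [T2Space G]
    (K : Set G) (hK : IsCompact K) (hK0 : K ∈ nhds (0 : G))
    (η : G → ℂ) (hpd : IsPositiveDefiniteFn η) (hη0 : 0 < (η 0).re)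
    (hud : UniformlyDiscrete {z : G | η z ≠ 0}) :
    (∀ ε : ℝ, 0 < ε → RelativelyDense {t : G | autocorrKNorm η K t < ε}) ↔
    (∀ ε : ℝ, 0 < ε → RelativelyDense (almostPeriods η ε)) := by
  classical
  obtain ⟨h0, h0pos⟩ := pd_real hpd
  set φ0 := (η 0).re with hφ0def
  have hKmem : (0:G) ∈ K := mem_of_mem_nhds hK0
  have hη0ne : η 0 ≠ 0 := by
    rw [h0]; exact_mod_cast (Complex.ofReal_ne_zero.mpr (ne_of_gt hη0))
  have h0Δ : (0:G) ∈ {z : G | η z ≠ 0} := hη0ne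
  obtain ⟨n, hn⟩ := ud_inter_card hud hK
  haveI : Nonempty G := ⟨0⟩
  set Δ : Set G := {z : G | η z ≠ 0} with hΔdef
  set F : G → G → ℝ := fun t x =>
    ∑' z : ↥((Δ ∪ ({t} + Δ)) ∩ ({x} + K)), ‖η ((z:G) - t) - η (z:G)‖ with hF
  have hNdef : ∀ t, autocorrKNorm η K t = ⨆ x, F t x := fun t => rfl
  -- finiteness and cardinality of the index sets
  have htrans : ∀ t x : G, ({t} + Δ) ∩ ({x} + K) = {t} + (Δ ∩ ({x - t} + K)) := by
    intro t x
    have h1 : {x} + K = {t} + ({x - t} + K) := by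
      rw [← add_assoc, Set.singleton_add_singleton, show t + (x - t) = x by abel]
    rw [h1, singleton_add_inter']
  have Sfin : ∀ t x : G, ((Δ ∪ ({t} + Δ)) ∩ ({x} + K)).Finite := by
    intro t x
    rw [Set.union_inter_distrib_right]
    refine Set.Finite.union (hn x).1 ?_
    rw [htrans, Set.singleton_add]
    exact Set.Finite.image _ (hn (x - t)).1
  have Scard : ∀ t x : G, ((Δ ∪ ({t} + Δ)) ∩ ({x} + K)).ncard ≤ n + n := by
    intro t x
    rw [Set.union_inter_distrib_right]
    refine le_trans (Set.ncard_union_le _ _) (add_le_add (hn x).2 ?_)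
    rw [htrans, Set.singleton_add, Set.ncard_image_of_injective _ (add_right_injective t)]
    exact (hn (x - t)).2
  -- upper bounds for F
  have hFle : ∀ (t x : G) (b : ℝ), 0 ≤ b →
      (∀ z : G, ‖η (z - t) - η z‖ ≤ b) → F t x ≤ (n + n : ℕ) * b := by
    intro t x b hb hball
    letI := (Sfin t x).fintype
    rw [hF]
    simp only
    rw [tsum_fintype]
    refine le_trans (Finset.sum_le_card_nsmul Finset.univ _ b (fun z _ => hball _)) ?_
    rw [nsmul_eq_mul]
    refine mul_le_mul_of_nonneg_right ?_ hb
    have hcard : ((Finset.univ : Finset ↥((Δ ∪ ({t} + Δ)) ∩ ({x} + K))).card : ℕ) = ((Δ ∪ ({t} + Δ)) ∩ ({x} + K)).ncard := by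
      rw [Finset.card_univ, ← Nat.card_eq_fintype_card, Nat.card_coe_set_eq]
    exact_mod_cast hcard ▸ Scard t x
  have habs2 : ∀ (t z : G), ‖η (z - t) - η z‖ ≤ 2 * φ0 := by
    intro t z
    calc ‖η (z - t) - η z‖
        ≤ ‖η (z - t)‖ + ‖η z‖ := by
          simpa using norm_sub_le (η (z - t)) (η z)
      _ ≤ 2 * φ0 := by
          have := pd_abs_le hpd (z - t); have := pd_abs_le hpd z; linarith
  have hbddF : ∀ t, BddAbove (Set.range (F t)) := by
    intro t
    refine ⟨(n + n : ℕ) * (2 * φ0), ?_⟩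
    rintro _ ⟨x, rfl⟩
    exact hFle t x _ (by positivity) (habs2 t)
  have hN_le : ∀ (t : G) (b : ℝ), 0 ≤ b →
      (∀ z : G, ‖η (z - t) - η z‖ ≤ b) → autocorrKNorm η K t ≤ (n + n : ℕ) * b := by
    intro t b hb hball
    rw [hNdef]
    exact ciSup_le fun x => hFle t x b hb hball
  -- lower bound: the single term at z = t
  have hN_ge : ∀ t : G, ‖η 0 - η t‖ ≤ autocorrKNorm η K t := by
    intro t
    have hz : t ∈ (Δ ∪ ({t} + Δ)) ∩ ({t} + K) := by
      constructor
      · right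
        rw [Set.singleton_add]
        exact ⟨0, h0Δ, by simp⟩
      · rw [Set.singleton_add]
        exact ⟨0, hKmem, by simp⟩
    have h1 : ‖η 0 - η t‖ ≤ F t t := by
      letI := (Sfin t t).fintype
      rw [hF]
      simp only
      rw [tsum_fintype]
      have := Finset.single_le_sum
        (f := fun z : ↥((Δ ∪ ({t} + Δ)) ∩ ({t} + K)) =>
          ‖η ((z:G) - t) - η (z:G)‖)
        (fun i _ => norm_nonneg _) (Finset.mem_univ ⟨t, hz⟩)
      simpa [sub_self] using this
    exact le_trans h1 (by rw [hNdef]; exact le_ciSup (hbddF t) t)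
  -- key pointwise estimate via positive definiteness
  have hrho_nonneg : ∀ t : G, 0 ≤ acRho η t 0 := fun t => Real.sqrt_nonneg _
  have hrho_sq : ∀ t : G, (acRho η t 0) ^ 2 = ‖1 - η t / η 0‖ := by
    intro t
    rw [acRho, sub_zero, Real.sq_sqrt (norm_nonneg _)]
  have hE1 : ∀ t z : G, ‖η (z - t) - η z‖ ≤ Real.sqrt 2 * φ0 * acRho η t 0 := by
    intro t z
    have hd := pd_diff hpd hη0 (z - t) z
    rw [show z - t - z = -t by abel, pd_herm hpd t] at hd
    have hre : ((starRingEnd ℂ) (η t)).re = (η t).re := Complex.conj_re _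
    rw [hre] at hd
    -- φ0 - (η t).re ≤ φ0 * |1 - η t / η 0|
    have h2 : φ0 - (η t).re ≤ φ0 * ‖1 - η t / η 0‖ := by
      have h3 : (1 - η t / η 0).re ≤ ‖1 - η t / η 0‖ := Complex.re_le_norm _
      have h4 : (1 - η t / η 0).re = 1 - (η t).re / φ0 := by
        rw [Complex.sub_re, h0, Complex.div_ofReal_re, Complex.one_re]
      rw [h4] at h3
      have h5 : φ0 * (1 - (η t).re / φ0) = φ0 - (η t).re := by
        field_simp
      nlinarith [hη0]
    have h6 : ‖η (z - t) - η z‖ ^ 2 ≤ (Real.sqrt 2 * φ0 * acRho η t 0) ^ 2 := by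
      have h7 : (Real.sqrt 2 * φ0 * acRho η t 0) ^ 2
          = 2 * φ0 ^ 2 * ‖1 - η t / η 0‖ := by
        rw [mul_pow, mul_pow, Real.sq_sqrt (by norm_num : (0:ℝ) ≤ 2), hrho_sq]
      rw [h7]
      nlinarith [hd, h2, hη0]
    nlinarith [h6, norm_nonneg (η (z - t) - η z),
      mul_nonneg (mul_nonneg (Real.sqrt_nonneg 2) (le_of_lt hη0)) (hrho_nonneg t)]
  have habs_div : ∀ t : G, ‖1 - η t / η 0‖ = ‖η 0 - η t‖ / φ0 := by
    intro t
    have h1 : (1 : ℂ) - η t / η 0 = (η 0 - η t) / η 0 := by field_simp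
    rw [h1, norm_div]
    congr 1
    rw [h0, Complex.norm_real, Real.norm_eq_abs, abs_of_pos hη0]
  constructor
  · intro hA ε hε
    refine RelativelyDense.mono' ?_ (hA (ε ^ 2 * φ0) (by positivity))
    intro t ht
    simp only [Set.mem_setOf_eq] at ht
    show acRho η t 0 < ε
    have h1 : ‖η 0 - η t‖ < ε ^ 2 * φ0 := lt_of_le_of_lt (hN_ge t) ht
    rw [acRho, sub_zero]
    rw [Real.sqrt_lt' hε, habs_div, div_lt_iff₀ hη0]
    linarith
  · intro hB ε hε
    set c : ℝ := (n + n : ℕ) * (Real.sqrt 2 * φ0) with hc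
    have hc0 : 0 ≤ c := by positivity
    have hδ0 : 0 < ε / (c + 1) := by positivity
    refine RelativelyDense.mono' ?_ (hB (ε / (c + 1)) hδ0)
    intro t ht
    simp only [almostPeriods, Set.mem_setOf_eq] at ht
    show autocorrKNorm η K t < ε
    have h1 : autocorrKNorm η K t ≤ (n + n : ℕ) * (Real.sqrt 2 * φ0 * acRho η t 0) :=
      hN_le t _ (mul_nonneg (by positivity) (hrho_nonneg t)) (fun z => hE1 t z)
    have h2 : ((n + n : ℕ) : ℝ) * (Real.sqrt 2 * φ0 * acRho η t 0) = c * acRho η t 0 := by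
      rw [hc]; ring
    have h3 : c * acRho η t 0 ≤ c * (ε / (c + 1)) :=
      mul_le_mul_of_nonneg_left (le_of_lt ht) hc0
    have h4 : c * (ε / (c + 1)) < ε := by
      rw [mul_div_assoc', div_lt_iff₀ (by positivity)]
      nlinarith
    calc autocorrKNorm η K t ≤ c * acRho η t 0 := by rw [← h2]; exact h1
      _ ≤ c * (ε / (c + 1)) := h3
      _ < ε := h4
end
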